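/- Let k, l ≥ 2 be natural numbers and let M = ⟨a, b | aᵏ = bˡ⟩ be the torus knot monoid. Then M is right Ore (with respect to itself): for all m, s ∈ M there exist t, n ∈ M with m*t = s*n. -/

import Mathlib

/-- The congruence on the free monoid on two generators generated by the single
relation `a ^ k = b ^ l`, where `a = of 0` and `b = of 1`. -/
def torusKnotCon (k l : ℕ) : Con (FreeMonoid (Fin 2)) :=
  conGen fun x y =>
    x = FreeMonoid.of (0 : Fin 2) ^ k ∧ y = FreeMonoid.of (1 : Fin 2) ^ l

/-- The torus knot monoid `⟨a, b | a^k = b^l⟩`. -/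
abbrev TorusKnotMonoid (k l : ℕ) := (torusKnotCon k l).Quotient

/-- For `k, l ≥ 2`, the torus knot monoid `⟨a, b | a^k = b^l⟩` is right Ore
with respect to itself. -/
theorem torusKnotMonoid_rightOre (k l : ℕ) (hk : 2 ≤ k) (hl : 2 ≤ l) :
    ∀ m s : TorusKnotMonoid k l, ∃ t n : TorusKnotMonoid k l, m * t = s * n := by
  set φ := (torusKnotCon k l).mk' with hφ
  set A : TorusKnotMonoid k l := φ (FreeMonoid.of 0) with hA
  set B : TorusKnotMonoid k l := φ (FreeMonoid.of 1) with hB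
  set C : TorusKnotMonoid k l := A ^ k with hC
  have hrel : A ^ k = B ^ l := by
    rw [hA, hB, ← map_pow, ← map_pow]
    exact (Con.eq _).2 (ConGen.Rel.of _ _ ⟨rfl, rfl⟩)
  -- C commutes with generators
  have hgen : ∀ x : Fin 2, φ (FreeMonoid.of x) * C = C * φ (FreeMonoid.of x) := by
    intro x
    fin_cases x
    · show φ (FreeMonoid.of 0) * C = C * φ (FreeMonoid.of 0)
      rw [← hA, hC, ← pow_succ', ← pow_succ]
    · show φ (FreeMonoid.of 1) * C = C * φ (FreeMonoid.of 1)
      rw [← hB, hC, hrel, ← pow_succ', ← pow_succ]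
  -- C is central
  have hcen : ∀ m : TorusKnotMonoid k l, m * C = C * m := by
    intro m
    induction m using Con.induction_on with
    | H w =>
      induction w using FreeMonoid.inductionOn' with
      | one => simp
      | of_mul x xs ih =>
        change φ xs * C = C * φ xs at ih
        show φ (_ * _) * C = C * φ (_ * _)
        rw [map_mul, mul_assoc, ih, ← mul_assoc, hgen, mul_assoc]
  -- each generator right-divides C
  have hdivgen : ∀ x : Fin 2, ∃ u : TorusKnotMonoid k l, φ (FreeMonoid.of x) * u = C := by
    intro x
    fin_cases x
    · refine ⟨A ^ (k - 1), ?_⟩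
      show φ (FreeMonoid.of 0) * A ^ (k - 1) = C
      rw [← hA, hC, ← pow_succ']; congr 1; omega
    · refine ⟨B ^ (l - 1), ?_⟩
      show φ (FreeMonoid.of 1) * B ^ (l - 1) = C
      rw [← hB, hC, hrel, ← pow_succ']; congr 1; omega
  -- every element right-divides a power of C
  have hdiv : ∀ m : TorusKnotMonoid k l, ∃ t : TorusKnotMonoid k l, ∃ N : ℕ,
      m * t = C ^ N := by
    intro m
    induction m using Con.induction_on with
    | H w =>
      induction w using FreeMonoid.inductionOn' with
      | one => exact ⟨1, 0, by simp⟩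
      | of_mul x xs ih =>
        obtain ⟨t, N, ht⟩ := ih
        change φ xs * t = C ^ N at ht
        obtain ⟨u, hu⟩ := hdivgen x
        refine ⟨t * u, N + 1, ?_⟩
        show φ (_ * _) * (t * u) = _
        have hcomm : φ (FreeMonoid.of x) * C ^ N = C ^ N * φ (FreeMonoid.of x) :=
          (Commute.pow_right (hcen (φ (FreeMonoid.of x))) N)
        rw [map_mul, mul_assoc, ← mul_assoc (φ xs), ht, ← mul_assoc, hcomm,
          mul_assoc, hu, ← pow_succ]
  intro m s
  obtain ⟨tm, Nm, htm⟩ := hdiv m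
  obtain ⟨ts, Ns, hts⟩ := hdiv s
  refine ⟨tm * C ^ Ns, ts * C ^ Nm, ?_⟩
  rw [← mul_assoc, htm, ← mul_assoc, hts, ← pow_add, ← pow_add, Nat.add_comm]
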